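/- arXiv:1212.3724 — 2 statements merged into one kernel-verified Lean document; each statement's English description precedes it below -/
import Mathlib

section
/- Propagation of the support for the Landau master equation: Let d ≥ 2, Λ > 0, N ≥ 1, E₀ > 0, and let (F_t^N)_{t≥0} be a weak solution of the Landau master equation with supp F_0^N ⊆ { V ∈ (ℝ^d)^N : (1/N) Σ_{i=1}^N |v_i|² ≤ E₀ }. Then for every t > 0, supp F_t^N ⊆ { V ∈ (ℝ^d)^N : (1/N) Σ_{i=1}^N |v_i|² ≤ E₀ }. -/
open MeasureTheory Real Filter Topology
open scoped ENNReal NNReal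

noncomputable section

abbrev Vd (d : ℕ) : Type := EuclideanSpace ℝ (Fin d)
abbrev Pp (d N : ℕ) : Type := Fin N → Vd d

/-- The Landau matrix `a(z) = Λ (|z|² Id − z zᵀ)` for Maxwellian molecules. -/
def aL (d : ℕ) (Λ : ℝ) (z : Vd d) (α β : Fin d) : ℝ :=
  Λ * (‖z‖ ^ 2 * (if α = β then (1 : ℝ) else 0) - z α * z β)

/-- The Landau vector `b(z) = −Λ(d−1) z` for Maxwellian molecules. -/
def bL (d : ℕ) (Λ : ℝ) (z : Vd d) (α : Fin d) : ℝ :=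
  -(Λ * ((d : ℝ) - 1)) * z α

/-- The coordinate direction `e_{i,α}` in the `N`-particle phase space. -/
def eN (d N : ℕ) (i : Fin N) (α : Fin d) : Pp d N :=
  Pi.single i (EuclideanSpace.single α (1 : ℝ))

/-- Partial derivative `∂_{v_{i,α}} φ`. -/
def pd1 {d N : ℕ} (φ : Pp d N → ℝ) (V : Pp d N) (i : Fin N) (α : Fin d) : ℝ :=
  fderiv ℝ φ V (eN d N i α)

/-- Second partial derivative `∂_{v_{j,β}} ∂_{v_{i,α}} φ`. -/
def pd2 {d N : ℕ} (φ : Pp d N → ℝ) (V : Pp d N) (i : Fin N) (α : Fin d)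
    (j : Fin N) (β : Fin d) : ℝ :=
  fderiv ℝ (fun W => fderiv ℝ φ W (eN d N i α)) V (eN d N j β)

/-- The Landau `N`-particle generator `G_L^N`. -/
def GLN (d N : ℕ) (Λ : ℝ) (φ : Pp d N → ℝ) (V : Pp d N) : ℝ :=
  (N : ℝ)⁻¹ * ∑ i, ∑ j, ∑ α, bL d Λ (V i - V j) α * (pd1 φ V i α - pd1 φ V j α)
    + (2 * (N : ℝ))⁻¹ * ∑ i, ∑ j, ∑ α, ∑ β, aL d Λ (V i - V j) α β *
        (pd2 φ V i α i β + pd2 φ V j α j β - pd2 φ V i α j β - pd2 φ V j α i β)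

/-- One-particle gradient `∂_α φ`. -/
def gr {d : ℕ} (φ : Vd d → ℝ) (v : Vd d) (α : Fin d) : ℝ :=
  fderiv ℝ φ v (EuclideanSpace.single α (1 : ℝ))

/-- One-particle Hessian `∂_{αβ} φ`. -/
def hess {d : ℕ} (φ : Vd d → ℝ) (v : Vd d) (α β : Fin d) : ℝ :=
  fderiv ℝ (fun w => fderiv ℝ φ w (EuclideanSpace.single α (1 : ℝ))) v
    (EuclideanSpace.single β (1 : ℝ))

/-- Integrand of the weak form of the Landau collision operator:
`(1/2) a(v−w) : (∇²φ(v) + ∇²φ(w)) + b(v−w)·(∇φ(v) − ∇φ(w))`. -/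
def landauKer (d : ℕ) (Λ : ℝ) (φ : Vd d → ℝ) (v w : Vd d) : ℝ :=
  (1 / 2) * ∑ α, ∑ β, aL d Λ (v - w) α β * (hess φ v α β + hess φ w α β)
    + ∑ α, bL d Λ (v - w) α * (gr φ v α - gr φ w α)

/-- `C²` functions with bounded derivatives up to order 2. -/
def TestC2 {X : Type} [NormedAddCommGroup X] [NormedSpace ℝ X] (φ : X → ℝ) : Prop :=
  ContDiff ℝ 2 φ ∧ ∀ n : ℕ, n ≤ 2 → ∃ C : ℝ, ∀ x, ‖iteratedFDeriv ℝ n φ x‖ ≤ C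

/-- Moment of order `k` of a measure on `ℝ^d`. -/
def momk (d k : ℕ) (μ : Measure (Vd d)) : ℝ≥0∞ :=
  ∫⁻ v, (‖v‖₊ : ℝ≥0∞) ^ k ∂μ

/-- Weak solution of the spatially homogeneous Landau equation for Maxwellian molecules. -/
def IsLandauSol (d : ℕ) (Λ : ℝ) (f : ℝ → Measure (Vd d)) : Prop :=
  (∀ t, IsProbabilityMeasure (f t)) ∧ (∀ t, momk d 2 (f t) < ⊤) ∧
    ∀ φ : Vd d → ℝ, TestC2 φ → ∀ t : ℝ, 0 ≤ t →
      ∫ v, φ v ∂(f t) = (∫ v, φ v ∂(f 0)) +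
        ∫ s in Set.Ioc (0 : ℝ) t, ∫ v, ∫ w, landauKer d Λ φ v w ∂(f s) ∂(f s)

/-- Conservation of momentum and energy. -/
def Conserves (d : ℕ) (f : ℝ → Measure (Vd d)) : Prop :=
  (∀ t : ℝ, 0 ≤ t → (∫ v, v ∂(f t)) = ∫ v, v ∂(f 0)) ∧
    ∀ t : ℝ, 0 ≤ t → momk d 2 (f t) = momk d 2 (f 0)

/-- Weak solution of the Landau master equation. -/
def IsMasterSol (d N : ℕ) (Λ : ℝ) (F : ℝ → Measure (Pp d N)) : Prop :=
  (∀ t, IsProbabilityMeasure (F t)) ∧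
    (∀ t, (∫⁻ V, ∑ i, (‖V i‖₊ : ℝ≥0∞) ^ 2 ∂(F t)) < ⊤) ∧
    ∀ φ : Pp d N → ℝ, TestC2 φ → ∀ t : ℝ, 0 ≤ t →
      ∫ V, φ V ∂(F t) = (∫ V, φ V ∂(F 0)) +
        ∫ s in Set.Ioc (0 : ℝ) t, ∫ V, GLN d N Λ φ V ∂(F s)

/-- Fourier transform of a measure, `μ̂(ξ) = ∫ e^{−i ξ·v} μ(dv)`. -/
def ftM (d : ℕ) (μ : Measure (Vd d)) (ξ : Vd d) : ℂ :=
  ∫ v, Complex.exp (-(Complex.I) * ((inner ℝ ξ v : ℝ) : ℂ)) ∂μ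

/-- Fourier-based distance `|μ − ν|_s`, with values in `[0,∞]`. -/
def fdist (d : ℕ) (s : ℝ) (μ ν : Measure (Vd d)) : ℝ≥0∞ :=
  ⨆ (ξ : Vd d) (_ : ξ ≠ 0), ENNReal.ofReal (‖ftM d μ ξ - ftM d ν ξ‖ / ‖ξ‖ ^ s)

open scoped Classical in
/-- A finite measure, seen as a signed measure. -/
def toSgn {X : Type} [MeasurableSpace X] (μ : Measure X) : SignedMeasure X :=
  if h : IsFiniteMeasure μ then @Measure.toSignedMeasure X _ μ h else 0

/-- Integral of a function against a signed measure. -/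
def sInt {X : Type} [MeasurableSpace X] (μ : SignedMeasure X) (f : X → ℝ) : ℝ :=
  (∫ x, f x ∂μ.toJordanDecomposition.posPart) - ∫ x, f x ∂μ.toJordanDecomposition.negPart

/-- Fourier transform of a signed measure. -/
def ftS (d : ℕ) (μ : SignedMeasure (Vd d)) (ξ : Vd d) : ℂ :=
  ftM d μ.toJordanDecomposition.posPart ξ - ftM d μ.toJordanDecomposition.negPart ξ

/-- Fourier-based norm `|μ|_s` of a signed measure, with values in `[0,∞]`. -/
def fdistS (d : ℕ) (s : ℝ) (μ : SignedMeasure (Vd d)) : ℝ≥0∞ :=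
  ⨆ (ξ : Vd d) (_ : ξ ≠ 0), ENNReal.ofReal (‖ftS d μ ξ‖ / ‖ξ‖ ^ s)

/-- Moment of order `k` of a signed measure (against its total variation). -/
def momkS (d k : ℕ) (μ : SignedMeasure (Vd d)) : ℝ≥0∞ :=
  ∫⁻ v, (‖v‖₊ : ℝ≥0∞) ^ k ∂μ.totalVariation

/-- Symmetrized Landau bilinear form `⟨Q(μ,ν), φ⟩`. -/
def Qform (d : ℕ) (Λ : ℝ) (μ ν : SignedMeasure (Vd d)) (φ : Vd d → ℝ) : ℝ :=
  (1 / 2) * (sInt μ (fun v => sInt ν (fun w => landauKer d Λ φ v w))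
    + sInt ν (fun v => sInt μ (fun w => landauKer d Λ φ v w)))

/-- Weak solution of the linearized equation `∂ₜ h = 2Q(f,h)`. -/
def IsLinSol (d : ℕ) (Λ : ℝ) (f : ℝ → Measure (Vd d)) (h : ℝ → SignedMeasure (Vd d)) : Prop :=
  ∀ φ : Vd d → ℝ, TestC2 φ → ∀ t : ℝ, 0 ≤ t →
    sInt (h t) φ = sInt (h 0) φ + ∫ s in Set.Ioc (0 : ℝ) t, 2 * Qform d Λ (toSgn (f s)) (h s) φ

/-- Weak solution of the second-order equation `∂ₜ u = 2Q(f,u) + Q(h,h)`. -/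
def IsLin2Sol (d : ℕ) (Λ : ℝ) (f : ℝ → Measure (Vd d)) (h u : ℝ → SignedMeasure (Vd d)) : Prop :=
  ∀ φ : Vd d → ℝ, TestC2 φ → ∀ t : ℝ, 0 ≤ t →
    sInt (u t) φ = sInt (u 0) φ +
      ∫ s in Set.Ioc (0 : ℝ) t,
        (2 * Qform d Λ (toSgn (f s)) (u s) φ + Qform d Λ (h s) (h s) φ)

/-- Moments of order `k` bounded locally uniformly in time. -/
def LocBddMom (d k : ℕ) (h : ℝ → SignedMeasure (Vd d)) : Prop :=
  ∀ T : ℝ, 0 < T → ∃ C : ℝ, ∀ t ∈ Set.Icc (0 : ℝ) T, momkS d k (h t) ≤ ENNReal.ofReal C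

/-- Quadratic Wasserstein distance, with values in `[0,∞]`. -/
def W2d (d : ℕ) (μ ν : Measure (Vd d)) : ℝ≥0∞ :=
  ⨅ (pl : Measure (Vd d × Vd d)) (_ : pl.map Prod.fst = μ) (_ : pl.map Prod.snd = ν),
    (∫⁻ p, (‖p.1 - p.2‖₊ : ℝ≥0∞) ^ 2 ∂pl) ^ ((1 : ℝ) / 2)

/-- Wasserstein-1 distance on the `N`-particle space, with cost `∑ᵢ |vᵢ − wᵢ|`. -/
def W1N (d N : ℕ) (μ ν : Measure (Pp d N)) : ℝ≥0∞ :=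
  ⨅ (pl : Measure (Pp d N × Pp d N)) (_ : pl.map Prod.fst = μ) (_ : pl.map Prod.snd = ν),
    ∫⁻ p, ∑ i, (‖p.1 i - p.2 i‖₊ : ℝ≥0∞) ∂pl

/-- Empirical measure of `V = (v₁, …, v_N)`. -/
def empMeas (d N : ℕ) (V : Pp d N) : Measure (Vd d) :=
  ((N : ℝ≥0∞))⁻¹ • ∑ i, Measure.dirac (V i)

/-- Boltzmann sphere `S^N(En)` (with zero mean momentum). -/
def sphereSet (d N : ℕ) (En : ℝ) : Set (Pp d N) :=
  {V | (N : ℝ)⁻¹ * ∑ i, ‖V i‖ ^ 2 = En ∧ (N : ℝ)⁻¹ • (∑ i, V i) = 0}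

def flatten (d N : ℕ) (W : EuclideanSpace ℝ (Fin N × Fin d)) : Pp d N :=
  fun i => (WithLp.toLp 2 (fun α => W (i, α)) : EuclideanSpace ℝ (Fin d))

def gammaRaw (d N : ℕ) (En : ℝ) : Measure (Pp d N) :=
  ((μH[(d : ℝ) * N - d - 1] : Measure (EuclideanSpace ℝ (Fin N × Fin d))).restrict
      (flatten d N ⁻¹' sphereSet d N En)).map (flatten d N)

/-- The uniform probability measure on the Boltzmann sphere: the normalized
`(dN − d − 1)`-dimensional (Euclidean) Hausdorff measure. -/
def gammaN (d N : ℕ) (En : ℝ) : Measure (Pp d N) :=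
  (gammaRaw d N En Set.univ)⁻¹ • gammaRaw d N En

/-- The tensor product of a density `ρ`, conditioned to the Boltzmann sphere. -/
def condTensor (d N : ℕ) (En : ℝ) (ρ : Vd d → ℝ≥0∞) : Measure (Pp d N) :=
  (∫⁻ V, ∏ i, ρ (V i) ∂gammaN d N En)⁻¹ •
    (gammaN d N En).withDensity fun V => ∏ i, ρ (V i)

/-- The centered Gaussian probability measure on `ℝ^d` with energy `En`. -/
def gaussE (d : ℕ) (En : ℝ) : Measure (Vd d) :=
  volume.withDensity fun v =>
    ENNReal.ofReal ((2 * π * (En / d)) ^ (-(d : ℝ) / 2) * Real.exp (-‖v‖ ^ 2 / (2 * (En / d))))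

open scoped Classical in
/-- Relative entropy `H(μ|ν) ∈ [0,∞]` (equal to `+∞` if `μ` is not absolutely
continuous with respect to `ν`). -/
def relEnt {X : Type} [MeasurableSpace X] (μ ν : Measure X) : ℝ≥0∞ :=
  if μ ≪ ν then
    ∫⁻ x, ENNReal.ofReal ((μ.rnDeriv ν x).toReal * Real.log ((μ.rnDeriv ν x).toReal)
      - (μ.rnDeriv ν x).toReal + 1) ∂ν
  else ⊤

/-- Exchangeable (symmetric) measure on the `N`-particle space. -/
def IsSymmM (d N : ℕ) (μ : Measure (Pp d N)) : Prop :=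
  ∀ σ : Equiv.Perm (Fin N), μ.map (fun V i => V (σ i)) = μ

/-- Kac chaoticity: all marginals converge weakly to tensor powers. -/
def Chaotic (d : ℕ) (F : (N : ℕ) → Measure (Pp d N)) (f : Measure (Vd d)) : Prop :=
  ∀ (ℓ : ℕ) (φ : (Fin ℓ → Vd d) → ℝ), Continuous φ → (∃ B, ∀ x, |φ x| ≤ B) →
    Tendsto (fun N => if h : ℓ ≤ N then ∫ V, φ (fun k => V (Fin.castLE h k)) ∂(F N) else 0)
      atTop (𝓝 (∫ x, φ x ∂Measure.pi fun _ : Fin ℓ => f))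

/-- Fourier transform of a function, `φ̂(ξ) = ∫ e^{−i ξ·v} φ(v) dv`. -/
def ftF (d : ℕ) (φ : Vd d → ℝ) (ξ : Vd d) : ℂ :=
  ∫ v, Complex.exp (-(Complex.I) * ((inner ℝ ξ v : ℝ) : ℂ)) * (φ v : ℂ)

/-- The norm `‖φ‖_F = ∫ (1+|ξ|⁶)|φ̂(ξ)| dξ`. -/
def Fnorm (d : ℕ) (φ : Vd d → ℝ) : ℝ :=
  ∫ ξ, (1 + ‖ξ‖ ^ 6) * ‖ftF d φ ξ‖

/-- Sup norm. -/
def supNorm {X : Type} (φ : X → ℝ) : ℝ := ⨆ x, |φ x|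

/-- Lipschitz seminorm (i.e. `‖∇φ‖_{L^∞}`). -/
def lipSemi {X : Type} [NormedAddCommGroup X] (φ : X → ℝ) : ℝ :=
  sInf {K : ℝ | 0 ≤ K ∧ ∀ x y, |φ x - φ y| ≤ K * ‖x - y‖}

/-- `‖φ₁ ⊗ ⋯ ⊗ φ_ℓ‖_{F^{⊗3} ⊗ (L^∞)^{ℓ−3}}`. -/
def Fnorm3 (d ℓ : ℕ) (φs : Fin ℓ → Vd d → ℝ) : ℝ :=
  sSup {x : ℝ | ∃ i₁ i₂ i₃ : Fin ℓ, i₁ ≠ i₂ ∧ i₁ ≠ i₃ ∧ i₂ ≠ i₃ ∧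
    x = Fnorm d (φs i₁) * Fnorm d (φs i₂) * Fnorm d (φs i₃) *
      ∏ k ∈ ({i₁, i₂, i₃}ᶜ : Finset (Fin ℓ)), supNorm (φs k)}

/-- `‖φ₁ ⊗ ⋯ ⊗ φ_ℓ‖_{W^{1,∞} ⊗ (L^∞)^{ℓ−1}}`. -/
def W1infNorm (d ℓ : ℕ) (φs : Fin ℓ → Vd d → ℝ) : ℝ :=
  sSup {x : ℝ | ∃ i : Fin ℓ,
    x = (supNorm (φs i) + lipSemi (φs i)) * ∏ k ∈ ({i}ᶜ : Finset (Fin ℓ)), supNorm (φs k)}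

/-- Post-collisional configuration `V'_{ij}` with collision direction `σ`. -/
def collide (d N : ℕ) (V : Pp d N) (i j : Fin N) (σ : Vd d) : Pp d N :=
  Function.update (Function.update V i
    ((1 / 2 : ℝ) • (V i + V j) + (‖V i - V j‖ / 2) • σ)) j
    ((1 / 2 : ℝ) • (V i + V j) - (‖V i - V j‖ / 2) • σ)

-- coordinate CLM
def coordL (d N : ℕ) (i : Fin N) (α : Fin d) : Pp d N →L[ℝ] ℝ :=
  (EuclideanSpace.proj α).comp (ContinuousLinearMap.proj i)

lemma coordL_apply (d N : ℕ) (i : Fin N) (α : Fin d) (V : Pp d N) :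
    coordL d N i α V = V i α := rfl

lemma eN_apply (d N : ℕ) (i : Fin N) (α : Fin d) (j : Fin N) (β : Fin d) :
    eN d N i α j β = if j = i ∧ β = α then 1 else 0 := by
  unfold eN
  rcases eq_or_ne j i with h | h
  · subst h; simp [Pi.single_eq_same, EuclideanSpace.single_apply]
  · simp [Pi.single_eq_of_ne h, h]

lemma normsq_eq {d : ℕ} (v : Vd d) : ‖v‖ ^ 2 = ∑ α, v α ^ 2 := by
  rw [EuclideanSpace.norm_eq, Real.sq_sqrt (by positivity)]
  simp [sq_abs]

def DQ (d N : ℕ) (V : Pp d N) : Pp d N →L[ℝ] ℝ :=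
  ∑ i, ∑ α, (2 * V i α) • coordL d N i α

lemma hasFDerivAt_Qsum (d N : ℕ) (V : Pp d N) :
    HasFDerivAt (fun W : Pp d N => ∑ i, ∑ α, W i α ^ 2) (DQ d N V) V := by
  apply HasFDerivAt.fun_sum; intro i _
  apply HasFDerivAt.fun_sum; intro α _
  have h := ((coordL d N i α).hasFDerivAt (x := V)).fun_mul ((coordL d N i α).hasFDerivAt (x := V))
  have h2 : HasFDerivAt (fun y : Pp d N => y i α * y i α)
      ((2 * V i α) • coordL d N i α) V := by
    refine h.congr_fderiv ?_
    rw [coordL_apply, two_mul, add_smul]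
  simpa [pow_two] using h2

lemma DQ_apply (d N : ℕ) (V : Pp d N) (j : Fin N) (β : Fin d) :
    DQ d N V (eN d N j β) = 2 * V j β := by
  unfold DQ
  simp only [ContinuousLinearMap.sum_apply, ContinuousLinearMap.smul_apply,
    coordL_apply, eN_apply, smul_eq_mul]
  rw [Finset.sum_eq_single j]
  · rw [Finset.sum_eq_single β] <;> simp +contextual
  · intro i _ hi
    apply Finset.sum_eq_zero; intro α _
    simp [hi]
  · simp

def qf (d N : ℕ) (E₀ : ℝ) (V : Pp d N) : ℝ :=
  (N : ℝ)⁻¹ * ∑ i, ∑ α, V i α ^ 2 - E₀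

def φf (d N : ℕ) (E₀ : ℝ) (V : Pp d N) : ℝ :=
  Real.smoothTransition (qf d N E₀ V)

lemma hasFDerivAt_qf (d N : ℕ) (E₀ : ℝ) (V : Pp d N) :
    HasFDerivAt (qf d N E₀) ((N : ℝ)⁻¹ • DQ d N V) V := by
  unfold qf
  exact (((hasFDerivAt_Qsum d N V).const_mul _).sub_const E₀)

lemma smoothTransition_differentiable : Differentiable ℝ Real.smoothTransition :=
  (Real.smoothTransition.contDiff (n := (⊤ : ℕ∞))).differentiable (by simp)

lemma smoothTransition_deriv_differentiable : Differentiable ℝ (deriv Real.smoothTransition) :=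
  ((contDiff_infty_iff_deriv.mp (Real.smoothTransition.contDiff (n := (⊤ : ℕ∞)))).2).differentiable
    (by simp)

lemma hasFDerivAt_φf (d N : ℕ) (E₀ : ℝ) (V : Pp d N) :
    HasFDerivAt (φf d N E₀)
      ((deriv Real.smoothTransition (qf d N E₀ V)) • ((N : ℝ)⁻¹ • DQ d N V)) V :=
  ((smoothTransition_differentiable (qf d N E₀ V)).hasDerivAt).comp_hasFDerivAt V
    (hasFDerivAt_qf d N E₀ V)

lemma pd1_φf (d N : ℕ) (E₀ : ℝ) (V : Pp d N) (i : Fin N) (α : Fin d) :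
    pd1 (φf d N E₀) V i α
      = deriv Real.smoothTransition (qf d N E₀ V) * ((N : ℝ)⁻¹ * (2 * V i α)) := by
  unfold pd1
  rw [(hasFDerivAt_φf d N E₀ V).fderiv]
  simp [DQ_apply]

lemma pd2_φf (d N : ℕ) (E₀ : ℝ) (V : Pp d N) (i : Fin N) (α : Fin d)
    (j : Fin N) (β : Fin d) :
    pd2 (φf d N E₀) V i α j β
      = deriv (deriv Real.smoothTransition) (qf d N E₀ V)
          * ((N : ℝ)⁻¹ * (2 * V j β)) * ((N : ℝ)⁻¹ * (2 * V i α))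
        + deriv Real.smoothTransition (qf d N E₀ V)
          * ((N : ℝ)⁻¹ * (2 * (if i = j ∧ α = β then 1 else 0))) := by
  set χ := Real.smoothTransition
  have hg : (fun W => fderiv ℝ (φf d N E₀) W (eN d N i α))
      = fun W => deriv χ (qf d N E₀ W) * ((N : ℝ)⁻¹ * (2 * W i α)) := by
    funext W
    exact pd1_φf d N E₀ W i α
  -- derivative of the first factor
  have h1 : HasFDerivAt (fun W => deriv χ (qf d N E₀ W))
      ((deriv (deriv χ) (qf d N E₀ V)) • ((N : ℝ)⁻¹ • DQ d N V)) V :=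
    ((smoothTransition_deriv_differentiable (qf d N E₀ V)).hasDerivAt).comp_hasFDerivAt V
      (hasFDerivAt_qf d N E₀ V)
  -- derivative of the second factor
  have h2 : HasFDerivAt (fun W : Pp d N => (N : ℝ)⁻¹ * (2 * W i α))
      (((N : ℝ)⁻¹ * 2) • coordL d N i α) V := by
    have := ((coordL d N i α).hasFDerivAt (x := V)).const_mul ((N : ℝ)⁻¹ * 2)
    simpa [coordL_apply, mul_assoc] using this
  have hmul := h1.fun_mul h2
  unfold pd2
  rw [hg, hmul.fderiv]
  simp only [ContinuousLinearMap.add_apply, ContinuousLinearMap.smul_apply,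
    ContinuousLinearMap.coe_smul', Pi.smul_apply, coordL_apply, smul_eq_mul,
    DQ_apply, eN_apply]
  rcases eq_or_ne i j with h | h
  · subst h
    rcases eq_or_ne α β with h' | h'
    · subst h'; simp; ring
    · simp [h', Ne.symm h']; ring
  · simp [h, Ne.symm h]; ring

lemma contract (d : ℕ) (Λ B E s : ℝ) (z : Fin d → ℝ) (hs : s = ∑ γ, z γ ^ 2) :
    ∑ α, ∑ β, (Λ * (s * (if α = β then (1:ℝ) else 0) - z α * z β))
        * (B * (z α * z β) + E * (if α = β then (1:ℝ) else 0))
      = Λ * E * ((d : ℝ) - 1) * s := by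
  have inner : ∀ α : Fin d, ∑ β, (Λ * (s * (if α = β then (1:ℝ) else 0) - z α * z β))
        * (B * (z α * z β) + E * (if α = β then (1:ℝ) else 0))
      = Λ * E * (s - z α ^ 2) := by
    intro α
    have hpt : ∀ β : Fin d, (Λ * (s * (if α = β then (1:ℝ) else 0) - z α * z β))
          * (B * (z α * z β) + E * (if α = β then (1:ℝ) else 0))
        = (-(Λ * B * z α ^ 2)) * z β ^ 2
          + (if α = β then (Λ * (s - z α ^ 2) * (B * z α ^ 2 + E) + Λ * B * z α ^ 4) else 0) := by
      intro β
      rcases eq_or_ne α β with h | h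
      · subst h; simp; ring
      · simp only [if_neg h]; ring
    rw [Finset.sum_congr rfl fun β _ => hpt β, Finset.sum_add_distrib, ← Finset.mul_sum,
      Finset.sum_ite_eq, if_pos (Finset.mem_univ α), ← hs]
    ring
  rw [Finset.sum_congr rfl fun α _ => inner α]
  have expand : ∀ α : Fin d, Λ * E * (s - z α ^ 2) = Λ * E * s - Λ * E * z α ^ 2 := by
    intro α; ring
  rw [Finset.sum_congr rfl fun α _ => expand α, Finset.sum_sub_distrib, Finset.sum_const,
    Finset.card_univ, Fintype.card_fin, nsmul_eq_mul]
  have hpull : ∑ α : Fin d, Λ * E * z α ^ 2 = Λ * E * ∑ α, z α ^ 2 := by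
    rw [Finset.mul_sum]
  rw [hpull, ← hs]
  ring

lemma GLN_φf (d N : ℕ) (Λ E₀ : ℝ) (V : Pp d N) : GLN d N Λ (φf d N E₀) V = 0 := by
  set D1 := deriv Real.smoothTransition (qf d N E₀ V) with hD1
  set D2 := deriv (deriv Real.smoothTransition) (qf d N E₀ V) with hD2
  set c := (N : ℝ)⁻¹ with hc
  set K : Fin N → Fin N → ℝ := fun i j =>
    Λ * ((d : ℝ) - 1) * (D1 * (2 * c)) * ∑ γ, (V i γ - V j γ) ^ 2 with hK
  have hsub : ∀ (i j : Fin N) (γ : Fin d), (V i - V j) γ = V i γ - V j γ := fun _ _ _ => rfl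
  have hns : ∀ i j : Fin N, ‖V i - V j‖ ^ 2 = ∑ γ, (V i γ - V j γ) ^ 2 := by
    intro i j; rw [normsq_eq]; rfl
  have hb : ∀ i j : Fin N,
      ∑ α, bL d Λ (V i - V j) α * (pd1 (φf d N E₀) V i α - pd1 (φf d N E₀) V j α)
        = -(K i j) := by
    intro i j
    have : ∀ α : Fin d, bL d Λ (V i - V j) α
          * (pd1 (φf d N E₀) V i α - pd1 (φf d N E₀) V j α)
        = (-(Λ * ((d : ℝ) - 1)) * (D1 * (2 * c))) * (V i α - V j α) ^ 2 := by
      intro α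
      rw [pd1_φf, pd1_φf, bL, ← hD1, ← hc]
      simp only [hsub]
      ring
    rw [Finset.sum_congr rfl fun α _ => this α, ← Finset.mul_sum, hK]
    ring
  have ha : ∀ i j : Fin N,
      ∑ α, ∑ β, aL d Λ (V i - V j) α β *
          (pd2 (φf d N E₀) V i α i β + pd2 (φf d N E₀) V j α j β
            - pd2 (φf d N E₀) V i α j β - pd2 (φf d N E₀) V j α i β)
        = 2 * K i j := by
    intro i j
    have hpt : ∀ α β : Fin d, aL d Λ (V i - V j) α β *
          (pd2 (φf d N E₀) V i α i β + pd2 (φf d N E₀) V j α j β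
            - pd2 (φf d N E₀) V i α j β - pd2 (φf d N E₀) V j α i β)
        = (Λ * ((∑ γ, (V i γ - V j γ) ^ 2) * (if α = β then (1:ℝ) else 0)
              - (V i α - V j α) * (V i β - V j β)))
            * ((D2 * (2 * c) * (2 * c)) * ((V i α - V j α) * (V i β - V j β))
              + (D1 * (2 * c) * (2 - 2 * (if i = j then (1:ℝ) else 0)))
                * (if α = β then (1:ℝ) else 0)) := by
      intro α β
      rw [aL, hns i j, pd2_φf, pd2_φf, pd2_φf, pd2_φf, ← hD2, ← hD1, ← hc]
      simp only [hsub]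
      rcases eq_or_ne i j with hij | hij
      · subst hij
        rcases eq_or_ne α β with hab | hab
        · subst hab
          simp only [eq_self_iff_true, and_self, and_true, true_and, if_true]
          ring
        · simp only [hab, Ne.symm hab, eq_self_iff_true, true_and, and_true, and_false,
            false_and, if_false, if_true]
          ring
      · rcases eq_or_ne α β with hab | hab
        · subst hab
          simp only [hij, Ne.symm hij, eq_self_iff_true, and_true, true_and, and_self,
            false_and, and_false, if_false, if_true]
          ring
        · simp only [hij, Ne.symm hij, hab, Ne.symm hab, false_and, and_false, if_false]
          ring
    calc ∑ α, ∑ β, aL d Λ (V i - V j) α β *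
          (pd2 (φf d N E₀) V i α i β + pd2 (φf d N E₀) V j α j β
            - pd2 (φf d N E₀) V i α j β - pd2 (φf d N E₀) V j α i β)
        = ∑ α, ∑ β, (Λ * ((∑ γ, (V i γ - V j γ) ^ 2) * (if α = β then (1:ℝ) else 0)
              - (V i α - V j α) * (V i β - V j β)))
            * ((D2 * (2 * c) * (2 * c)) * ((V i α - V j α) * (V i β - V j β))
              + (D1 * (2 * c) * (2 - 2 * (if i = j then (1:ℝ) else 0)))
                * (if α = β then (1:ℝ) else 0)) :=
          Finset.sum_congr rfl fun α _ => Finset.sum_congr rfl fun β _ => hpt α β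
      _ = Λ * (D1 * (2 * c) * (2 - 2 * (if i = j then (1:ℝ) else 0))) * ((d : ℝ) - 1)
            * ∑ γ, (V i γ - V j γ) ^ 2 :=
          contract d Λ _ _ _ (fun γ => V i γ - V j γ) rfl
      _ = 2 * K i j := by
          rcases eq_or_ne i j with hij | hij
          · subst hij
            have hs0 : (∑ γ, (V i γ - V i γ) ^ 2) = 0 := by simp
            rw [hs0, hK]; simp
          · rw [if_neg hij, hK]; ring
  unfold GLN
  rw [Finset.sum_congr rfl fun i _ => Finset.sum_congr rfl fun j _ => hb i j,
    Finset.sum_congr rfl fun i _ => Finset.sum_congr rfl fun j _ => ha i j]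
  simp only [Finset.sum_neg_distrib, ← Finset.mul_sum]
  rw [mul_inv]
  ring

lemma qf_contDiff (d N : ℕ) (E₀ : ℝ) {n : ℕ∞} : ContDiff ℝ n (qf d N E₀) := by
  unfold qf
  apply ContDiff.sub _ contDiff_const
  apply ContDiff.mul contDiff_const
  apply ContDiff.sum; intro i _
  apply ContDiff.sum; intro α _
  exact ((coordL d N i α).contDiff).pow 2

lemma φf_contDiff (d N : ℕ) (E₀ : ℝ) {n : ℕ∞} : ContDiff ℝ n (φf d N E₀) :=
  Real.smoothTransition.contDiff.comp (qf_contDiff d N E₀)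

lemma φf_testC2 (d N : ℕ) (hN : 1 ≤ N) (E₀ : ℝ) (hE₀ : 0 < E₀) :
    TestC2 (φf d N E₀) := by
  constructor
  · exact_mod_cast φf_contDiff d N E₀ (n := 2)
  · intro n hn
    rcases Nat.eq_zero_or_pos n with hn0 | hn0
    · subst hn0
      refine ⟨1, fun x => ?_⟩
      rw [norm_iteratedFDeriv_zero]
      show ‖Real.smoothTransition (qf d N E₀ x)‖ ≤ 1
      rw [Real.norm_eq_abs, abs_of_nonneg (Real.smoothTransition.nonneg _)]
      exact Real.smoothTransition.le_one _
    · -- n = 1 or 2 : compactness + vanishing outside a compact set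
      have hzero : ∀ V : Pp d N, 1 < qf d N E₀ V → iteratedFDeriv ℝ n (φf d N E₀) V = 0 := by
        intro V hV
        have hopen : IsOpen {W : Pp d N | 1 < qf d N E₀ W} :=
          isOpen_lt continuous_const (qf_contDiff d N E₀ (n := 0)).continuous
        have heq : φf d N E₀ =ᶠ[nhds V] fun _ => (1 : ℝ) := by
          filter_upwards [hopen.mem_nhds hV] with W hW
          exact Real.smoothTransition.one_of_one_le hW.le
        have h' : φf d N E₀ =ᶠ[nhdsWithin V Set.univ] fun _ => (1 : ℝ) := by
          rw [nhdsWithin_univ]; exact heq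
        have h2 := Filter.EventuallyEq.iteratedFDerivWithin_eq (𝕜 := ℝ) h'
          (Real.smoothTransition.one_of_one_le hV.le) n
        rw [← iteratedFDerivWithin_univ, h2, iteratedFDerivWithin_univ,
          iteratedFDeriv_const_of_ne (Nat.pos_iff_ne_zero.mp hn0)]
        rfl
      set K := {V : Pp d N | qf d N E₀ V ≤ 1} with hKdef
      have hKclosed : IsClosed K :=
        isClosed_le (qf_contDiff d N E₀ (n := 0)).continuous continuous_const
      have hKbdd : Bornology.IsBounded K := by
        rw [Metric.isBounded_iff_subset_closedBall 0]
        refine ⟨Real.sqrt ((N : ℝ) * (1 + E₀)), fun V hV => ?_⟩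
        rw [Metric.mem_closedBall, dist_zero_right]
        have hNE : (0 : ℝ) ≤ (N : ℝ) * (1 + E₀) := by positivity
        rw [pi_norm_le_iff_of_nonneg (Real.sqrt_nonneg _)]
        intro i
        rw [show ‖V i‖ = |‖V i‖| from (abs_of_nonneg (norm_nonneg _)).symm,
          ← Real.sqrt_sq_eq_abs]
        apply Real.sqrt_le_sqrt
        have h1 : ∑ j, ∑ α, V j α ^ 2 ≤ (N : ℝ) * (1 + E₀) := by
          have hq : qf d N E₀ V ≤ 1 := hV
          unfold qf at hq
          have hNpos : (0 : ℝ) < N := by exact_mod_cast hN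
          calc ∑ j, ∑ α, V j α ^ 2
              = (N : ℝ) * ((N : ℝ)⁻¹ * ∑ j, ∑ α, V j α ^ 2) := by
                field_simp
            _ ≤ (N : ℝ) * (1 + E₀) := by
                apply mul_le_mul_of_nonneg_left _ hNpos.le
                linarith
        calc ‖V i‖ ^ 2 = ∑ α, V i α ^ 2 := normsq_eq (V i)
          _ ≤ ∑ j, ∑ α, V j α ^ 2 := by
              apply Finset.single_le_sum (f := fun j => ∑ α, V j α ^ 2)
                (fun j _ => Finset.sum_nonneg fun α _ => sq_nonneg _) (Finset.mem_univ i)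
          _ ≤ (N : ℝ) * (1 + E₀) := h1
      have hKcompact : IsCompact K := Metric.isCompact_of_isClosed_isBounded hKclosed hKbdd
      have hKne : K.Nonempty := by
        refine ⟨0, ?_⟩
        have : qf d N E₀ 0 = -E₀ := by
          unfold qf; simp
        simp only [hKdef, Set.mem_setOf_eq, this]
        linarith
      have hcont : Continuous fun x => ‖iteratedFDeriv ℝ n (φf d N E₀) x‖ := by
        apply Continuous.norm
        exact (φf_contDiff d N E₀ (n := (⊤ : ℕ∞))).continuous_iteratedFDeriv
          (by exact_mod_cast le_top)
      obtain ⟨x₀, _, hmax⟩ := hKcompact.exists_isMaxOn hKne hcont.continuousOn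
      refine ⟨‖iteratedFDeriv ℝ n (φf d N E₀) x₀‖, fun V => ?_⟩
      by_cases hVK : V ∈ K
      · exact hmax hVK
      · have : 1 < qf d N E₀ V := lt_of_not_ge hVK
        rw [hzero V this]
        simp only [norm_zero]
        exact norm_nonneg _


/-- Propagation of the support for the Landau master equation. -/
theorem landau_master_support_propagation
    (d N : ℕ) (hd : 2 ≤ d) (hN : 1 ≤ N) (Λ E₀ : ℝ) (hΛ : 0 < Λ) (hE₀ : 0 < E₀)
    (F : ℝ → Measure (Pp d N)) (hF : IsMasterSol d N Λ F)
    (h0 : (F 0) {V : Pp d N | (N : ℝ)⁻¹ * ∑ i, ‖V i‖ ^ 2 ≤ E₀}ᶜ = 0) :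
    ∀ t : ℝ, 0 < t → (F t) {V : Pp d N | (N : ℝ)⁻¹ * ∑ i, ‖V i‖ ^ 2 ≤ E₀}ᶜ = 0 := by
  intro t ht
  obtain ⟨hprob, hmom, hweak⟩ := hF
  haveI : IsProbabilityMeasure (F t) := hprob t
  haveI : IsProbabilityMeasure (F 0) := hprob 0
  have hqf_eq : ∀ V : Pp d N, qf d N E₀ V = (N : ℝ)⁻¹ * ∑ i, ‖V i‖ ^ 2 - E₀ := by
    intro V
    unfold qf
    congr 2
    exact Finset.sum_congr rfl fun i _ => (normsq_eq (V i)).symm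
  have hφS : ∀ V : Pp d N, (N : ℝ)⁻¹ * ∑ i, ‖V i‖ ^ 2 ≤ E₀ → φf d N E₀ V = 0 := by
    intro V hV
    apply Real.smoothTransition.zero_of_nonpos
    rw [hqf_eq]
    linarith
  have hφpos : ∀ V : Pp d N, ¬ ((N : ℝ)⁻¹ * ∑ i, ‖V i‖ ^ 2 ≤ E₀) → 0 < φf d N E₀ V := by
    intro V hV
    apply Real.smoothTransition.pos_of_pos
    rw [hqf_eq]
    push_neg at hV
    linarith
  have hφcont : Continuous (φf d N E₀) := (φf_contDiff d N E₀ (n := 0)).continuous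
  have heq := hweak (φf d N E₀) (φf_testC2 d N hN E₀ hE₀) t ht.le
  have hzero2 : ∫ s in Set.Ioc (0 : ℝ) t, ∫ V, GLN d N Λ (φf d N E₀) V ∂(F s) = 0 := by
    have hin : ∀ s : ℝ, ∫ V, GLN d N Λ (φf d N E₀) V ∂(F s) = 0 := by
      intro s
      rw [show (fun V => GLN d N Λ (φf d N E₀) V) = fun _ => (0 : ℝ) from
        funext fun V => GLN_φf d N Λ E₀ V]
      exact integral_zero _ _
    simp only [hin, integral_zero]
  have h0int : ∫ V, φf d N E₀ V ∂(F 0) = 0 := by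
    have hae : φf d N E₀ =ᵐ[F 0] 0 := by
      rw [Filter.EventuallyEq, ae_iff]
      apply measure_mono_null _ h0
      intro V hV
      simp only [Set.mem_setOf_eq, Pi.zero_apply] at hV
      simp only [Set.mem_compl_iff, Set.mem_setOf_eq]
      intro hVS
      exact hV (hφS V hVS)
    calc ∫ V, φf d N E₀ V ∂(F 0) = ∫ V, (0 : ℝ) ∂(F 0) := integral_congr_ae hae
      _ = 0 := integral_zero _ _
  have hft0 : ∫ V, φf d N E₀ V ∂(F t) = 0 := by
    rw [heq, h0int, hzero2, zero_add]
  have hintt : Integrable (φf d N E₀) (F t) := by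
    refine (integrable_const (1 : ℝ)).mono' hφcont.aestronglyMeasurable ?_
    filter_upwards with V
    show ‖Real.smoothTransition (qf d N E₀ V)‖ ≤ 1
    rw [Real.norm_eq_abs, abs_of_nonneg (Real.smoothTransition.nonneg _)]
    exact Real.smoothTransition.le_one _
  have haet : φf d N E₀ =ᵐ[F t] 0 := by
    refine (integral_eq_zero_iff_of_nonneg ?_ hintt).mp hft0
    intro V
    exact Real.smoothTransition.nonneg _
  have hnull : (F t) {V : Pp d N | φf d N E₀ V ≠ 0} = 0 := by
    have := haet
    rw [Filter.EventuallyEq, ae_iff] at this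
    simpa using this
  apply measure_mono_null _ hnull
  intro V hV
  simp only [Set.mem_compl_iff, Set.mem_setOf_eq] at hV ⊢
  exact ne_of_gt (hφpos V hV)

end
end

section
/- Second-order remainder bound for Bobylev-type combinations of characteristic functions: For every d ≥ 2 and M > 0 there exists C > 0, depending only on d and M, with the following property. Let f, g be Borel probability measures on ℝ^d with ∫ v f(dv) = ∫ v g(dv) and ∫ |v|² f(dv) + ∫ |v|² g(dv) ≤ M. Set D(ξ) = f̂(ξ) − ĝ(ξ) and S(ξ) = f̂(ξ) + ĝ(ξ), where f̂(ξ) = ∫ e^{−i ξ·v} f(dv). Then for every ξ ∈ ℝ^d \ {0} and every unit vector σ ∈ S^{d−1}, writing ξ⁺ = (ξ + |ξ|σ)/2, ξ⁻ = (ξ − |ξ|σ)/2 and cos θ = σ·ξ/|ξ|, one has |D(ξ⁺) S(ξ⁻) + D(ξ⁻) S(ξ⁺) − 2 D(ξ)| ≤ C |ξ|² (1 − cos θ)^{1/2}. -/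
open MeasureTheory Real Filter Topology
open scoped ENNReal NNReal

noncomputable section

section BobylevHelpers

lemma norm_exp_negI (s : ℝ) : ‖Complex.exp (-(Complex.I) * (s : ℂ))‖ = 1 := by
  have h : (-(Complex.I) * (s : ℂ)) = ((-s : ℝ) : ℂ) * Complex.I := by push_cast; ring
  rw [h, Complex.norm_exp_ofReal_mul_I]

lemma exp_est1 (s : ℝ) : ‖Complex.exp (-(Complex.I) * (s : ℂ)) - 1‖ ≤ 2 * |s| := by
  rcases le_or_gt |s| 1 with h | h
  · have habs : ‖-(Complex.I) * (s : ℂ)‖ = |s| := by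
      simp
    have := Complex.norm_exp_sub_one_le (x := -(Complex.I) * (s : ℂ)) (by rw [habs]; exact h)
    rwa [habs] at this
  · calc ‖Complex.exp (-(Complex.I) * (s : ℂ)) - 1‖
        ≤ ‖Complex.exp (-(Complex.I) * (s : ℂ))‖ + ‖(1 : ℂ)‖ := norm_sub_le _ _
    _ = 2 := by rw [norm_exp_negI]; norm_num
    _ ≤ 2 * |s| := by nlinarith [abs_nonneg s]

lemma exp_est2 (s : ℝ) :
    ‖Complex.exp (-(Complex.I) * (s : ℂ)) - 1 + Complex.I * (s : ℂ)‖ ≤ 3 * s ^ 2 := by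
  have hre : Complex.exp (-(Complex.I) * (s : ℂ)) - 1 + Complex.I * (s : ℂ)
      = Complex.exp (-(Complex.I) * (s : ℂ)) - 1 - (-(Complex.I) * (s : ℂ)) := by ring
  rcases le_or_gt |s| 1 with h | h
  · have habs : ‖-(Complex.I) * (s : ℂ)‖ = |s| := by
      simp
    have h2 := Complex.norm_exp_sub_one_sub_id_le (x := -(Complex.I) * (s : ℂ))
      (by rw [habs]; exact h)
    rw [habs] at h2
    rw [hre]
    calc ‖_ - _‖ ≤ |s| ^ 2 := h2
    _ = s ^ 2 := sq_abs s
    _ ≤ 3 * s ^ 2 := by nlinarith [sq_nonneg s]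
  · have h1 : 1 ≤ s ^ 2 := by nlinarith [abs_nonneg s, sq_abs s]
    calc ‖Complex.exp (-(Complex.I) * (s : ℂ)) - 1 + Complex.I * (s : ℂ)‖
        ≤ ‖Complex.exp (-(Complex.I) * (s : ℂ)) - 1‖ + ‖Complex.I * (s : ℂ)‖ :=
          norm_add_le _ _
    _ ≤ 2 * |s| + |s| := by
        refine add_le_add (exp_est1 s) ?_
        simp [norm_mul]
    _ = 3 * |s| := by ring
    _ ≤ 3 * s ^ 2 := by nlinarith [abs_nonneg s, sq_abs s]

lemma integrable_exp_inner {d : ℕ} (μ : Measure (Vd d)) [IsFiniteMeasure μ] (η : Vd d) :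
    Integrable (fun v => Complex.exp (-(Complex.I) * ((inner ℝ η v : ℝ) : ℂ))) μ := by
  refine Integrable.mono' (integrable_const 1) ?_ ?_
  · apply Continuous.aestronglyMeasurable
    exact Complex.continuous_exp.comp
      (continuous_const.mul (Complex.continuous_ofReal.comp
        (Continuous.inner continuous_const continuous_id)))
  · filter_upwards with v
    rw [norm_exp_negI]

lemma ftM_norm_le {d : ℕ} (μ : Measure (Vd d)) [IsProbabilityMeasure μ] (η : Vd d) :
    ‖ftM d μ η‖ ≤ 1 := by
  have := norm_integral_le_of_norm_le_const (μ := μ) (C := 1)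
    (f := fun v => Complex.exp (-(Complex.I) * ((inner ℝ η v : ℝ) : ℂ)))
    (by filter_upwards with v; rw [norm_exp_negI])
  simpa [ftM] using this

lemma ftM_zero {d : ℕ} (μ : Measure (Vd d)) [IsProbabilityMeasure μ] : ftM d μ 0 = 1 := by
  simp [ftM]

lemma ft_shift {d : ℕ} (μ : Measure (Vd d)) [IsProbabilityMeasure μ]
    (h2 : Integrable (fun v => ‖v‖ ^ 2) μ) (hv : Integrable (fun v => v) μ) (a b : Vd d) :
    ‖ftM d μ (a + b) - ftM d μ a + Complex.I * ((inner ℝ b (∫ v, v ∂μ) : ℝ) : ℂ)‖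
      ≤ (3 * ‖b‖ ^ 2 + 2 * ‖a‖ * ‖b‖) * ∫ v, ‖v‖ ^ 2 ∂μ := by
  have hib : Integrable (fun v => Complex.I * ((inner ℝ b v : ℝ) : ℂ)) μ :=
    ((hv.const_inner b).ofReal).const_mul _
  have hsub : Integrable (fun v =>
      Complex.exp (-(Complex.I) * ((inner ℝ (a + b) v : ℝ) : ℂ))
        - Complex.exp (-(Complex.I) * ((inner ℝ a v : ℝ) : ℂ))) μ :=
    (integrable_exp_inner μ (a + b)).sub (integrable_exp_inner μ a)
  have key : ftM d μ (a + b) - ftM d μ a + Complex.I * ((inner ℝ b (∫ v, v ∂μ) : ℝ) : ℂ)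
      = ∫ v, (Complex.exp (-(Complex.I) * ((inner ℝ (a + b) v : ℝ) : ℂ))
          - Complex.exp (-(Complex.I) * ((inner ℝ a v : ℝ) : ℂ))
          + Complex.I * ((inner ℝ b v : ℝ) : ℂ)) ∂μ := by
    have hmean : (∫ v, (((inner ℝ b v : ℝ)) : ℂ) ∂μ) = ((inner ℝ b (∫ v, v ∂μ) : ℝ) : ℂ) := by
      rw [← integral_inner hv]
      exact _root_.integral_ofReal
    rw [integral_add hsub hib,
      integral_sub (integrable_exp_inner μ (a + b)) (integrable_exp_inner μ a),
      integral_const_mul, hmean]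
    rfl
  have hptwise : ∀ v : Vd d, ‖Complex.exp (-(Complex.I) * ((inner ℝ (a + b) v : ℝ) : ℂ))
        - Complex.exp (-(Complex.I) * ((inner ℝ a v : ℝ) : ℂ))
        + Complex.I * ((inner ℝ b v : ℝ) : ℂ)‖ ≤ (3 * ‖b‖ ^ 2 + 2 * ‖a‖ * ‖b‖) * ‖v‖ ^ 2 := by
    intro v
    set x : ℝ := inner ℝ a v with hx
    set y : ℝ := inner ℝ b v with hy
    have hxy : (inner ℝ (a + b) v : ℝ) = x + y := by rw [hx, hy, inner_add_left]
    have hsplit : Complex.exp (-(Complex.I) * (((x + y) : ℝ) : ℂ))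
        = Complex.exp (-(Complex.I) * (x : ℂ)) * Complex.exp (-(Complex.I) * (y : ℂ)) := by
      rw [← Complex.exp_add]; push_cast; ring_nf
    have hid : Complex.exp (-(Complex.I) * (((x + y) : ℝ) : ℂ))
          - Complex.exp (-(Complex.I) * (x : ℂ)) + Complex.I * (y : ℂ)
        = Complex.exp (-(Complex.I) * (x : ℂ))
            * (Complex.exp (-(Complex.I) * (y : ℂ)) - 1 + Complex.I * (y : ℂ))
          + (1 - Complex.exp (-(Complex.I) * (x : ℂ))) * (Complex.I * (y : ℂ)) := by
      rw [hsplit]; ring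
    rw [hxy, hid]
    have hxn : |x| ≤ ‖a‖ * ‖v‖ := by rw [hx]; exact abs_real_inner_le_norm a v
    have hyn : |y| ≤ ‖b‖ * ‖v‖ := by rw [hy]; exact abs_real_inner_le_norm b v
    have h1 : ‖Complex.exp (-(Complex.I) * (x : ℂ))
        * (Complex.exp (-(Complex.I) * (y : ℂ)) - 1 + Complex.I * (y : ℂ))‖ ≤ 3 * y ^ 2 := by
      rw [norm_mul, norm_exp_negI, one_mul]; exact exp_est2 y
    have h2' : ‖(1 - Complex.exp (-(Complex.I) * (x : ℂ))) * (Complex.I * (y : ℂ))‖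
        ≤ 2 * |x| * |y| := by
      rw [norm_mul]
      have ha : ‖(1 : ℂ) - Complex.exp (-(Complex.I) * (x : ℂ))‖ ≤ 2 * |x| := by
        rw [← norm_neg]; simpa [neg_sub] using exp_est1 x
      have hb : ‖Complex.I * (y : ℂ)‖ = |y| := by simp [norm_mul]
      rw [hb]
      exact mul_le_mul_of_nonneg_right ha (abs_nonneg y)
    have h3 : y ^ 2 ≤ (‖b‖ * ‖v‖) ^ 2 := by
      rw [← sq_abs y]; exact pow_le_pow_left₀ (abs_nonneg y) hyn 2
    have h4 : |x| * |y| ≤ (‖a‖ * ‖v‖) * (‖b‖ * ‖v‖) :=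
      mul_le_mul hxn hyn (abs_nonneg y) (by positivity)
    calc ‖_ + _‖ ≤ 3 * y ^ 2 + 2 * |x| * |y| := le_trans (norm_add_le _ _) (add_le_add h1 h2')
    _ ≤ (3 * ‖b‖ ^ 2 + 2 * ‖a‖ * ‖b‖) * ‖v‖ ^ 2 := by
        nlinarith [norm_nonneg v, norm_nonneg a, norm_nonneg b, abs_nonneg x, abs_nonneg y]
  rw [key]
  calc ‖∫ v, (Complex.exp (-(Complex.I) * ((inner ℝ (a + b) v : ℝ) : ℂ))
          - Complex.exp (-(Complex.I) * ((inner ℝ a v : ℝ) : ℂ))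
          + Complex.I * ((inner ℝ b v : ℝ) : ℂ)) ∂μ‖
      ≤ ∫ v, (3 * ‖b‖ ^ 2 + 2 * ‖a‖ * ‖b‖) * ‖v‖ ^ 2 ∂μ :=
        norm_integral_le_of_norm_le (h2.const_mul (3 * ‖b‖ ^ 2 + 2 * ‖a‖ * ‖b‖))
          (Filter.Eventually.of_forall hptwise)
  _ = (3 * ‖b‖ ^ 2 + 2 * ‖a‖ * ‖b‖) * ∫ v, ‖v‖ ^ 2 ∂μ := integral_const_mul _ _

end BobylevHelpers

set_option maxHeartbeats 1000000 in
/-- Second-order remainder bound for Bobylev-type combinations of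
characteristic functions. -/
theorem bobylev_second_order_remainder
    (d : ℕ) (hd : 2 ≤ d) (M : ℝ) (hM : 0 < M) :
    ∃ C : ℝ, 0 < C ∧
      ∀ f g : Measure (Vd d), IsProbabilityMeasure f → IsProbabilityMeasure g →
        (∫ v, v ∂f) = (∫ v, v ∂g) →
        momk d 2 f + momk d 2 g ≤ ENNReal.ofReal M →
        ∀ ξ : Vd d, ξ ≠ 0 → ∀ σ : Vd d, ‖σ‖ = 1 →
          ‖(ftM d f ((1 / 2 : ℝ) • (ξ + ‖ξ‖ • σ)) - ftM d g ((1 / 2 : ℝ) • (ξ + ‖ξ‖ • σ)))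
                * (ftM d f ((1 / 2 : ℝ) • (ξ - ‖ξ‖ • σ)) + ftM d g ((1 / 2 : ℝ) • (ξ - ‖ξ‖ • σ)))
              + (ftM d f ((1 / 2 : ℝ) • (ξ - ‖ξ‖ • σ)) - ftM d g ((1 / 2 : ℝ) • (ξ - ‖ξ‖ • σ)))
                * (ftM d f ((1 / 2 : ℝ) • (ξ + ‖ξ‖ • σ)) + ftM d g ((1 / 2 : ℝ) • (ξ + ‖ξ‖ • σ)))
              - 2 * (ftM d f ξ - ftM d g ξ)‖
            ≤ C * ‖ξ‖ ^ 2 * Real.sqrt (1 - (inner ℝ σ ξ : ℝ) / ‖ξ‖) := by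
  refine ⟨(1 + M) * (3 * M + 2) + 22 * M, by nlinarith, ?_⟩
  intro f g hf hg hmean hmom ξ hξ σ hσ
  -- integrability of the second moment
  have hmomf : momk d 2 f ≠ ⊤ :=
    ne_top_of_le_ne_top ENNReal.ofReal_ne_top (le_trans le_self_add hmom)
  have hmomg : momk d 2 g ≠ ⊤ :=
    ne_top_of_le_ne_top ENNReal.ofReal_ne_top (le_trans le_add_self hmom)
  have key2 : ∀ μ : Measure (Vd d), momk d 2 μ ≠ ⊤ → Integrable (fun v : Vd d => ‖v‖ ^ 2) μ := by
    intro μ hμ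
    refine ⟨(continuous_norm.pow 2).aestronglyMeasurable, ?_⟩
    rw [hasFiniteIntegral_iff_ofReal (Filter.Eventually.of_forall fun v => by positivity)]
    have heq : (∫⁻ v, ENNReal.ofReal (‖v‖ ^ 2) ∂μ) = momk d 2 μ := by
      refine lintegral_congr fun v => ?_
      rw [ENNReal.ofReal_pow (norm_nonneg v), ofReal_norm]; rfl
    rw [heq]
    exact lt_top_iff_ne_top.mpr hμ
  have hf2 : Integrable (fun v : Vd d => ‖v‖ ^ 2) f := key2 f hmomf
  have hg2 : Integrable (fun v : Vd d => ‖v‖ ^ 2) g := key2 g hmomg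
  set Mf := ∫ v, ‖v‖ ^ 2 ∂f with hMf_def
  set Mg := ∫ v, ‖v‖ ^ 2 ∂g with hMg_def
  have hMf0 : 0 ≤ Mf := integral_nonneg fun v => by positivity
  have hMg0 : 0 ≤ Mg := integral_nonneg fun v => by positivity
  have hofR : ∀ (μ : Measure (Vd d)), Integrable (fun v : Vd d => ‖v‖ ^ 2) μ →
      ENNReal.ofReal (∫ v, ‖v‖ ^ 2 ∂μ) = momk d 2 μ := by
    intro μ hint
    rw [ofReal_integral_eq_lintegral_ofReal hint (Filter.Eventually.of_forall fun v => by positivity)]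
    refine lintegral_congr fun v => ?_
    rw [ENNReal.ofReal_pow (norm_nonneg v), ofReal_norm]; rfl
  have hMfg : Mf + Mg ≤ M := by
    have h1 : ENNReal.ofReal (Mf + Mg) ≤ ENNReal.ofReal M := by
      rw [ENNReal.ofReal_add hMf0 hMg0, hofR f hf2, hofR g hg2]
      exact hmom
    exact (ENNReal.ofReal_le_ofReal_iff hM.le).mp h1
  -- integrability of v
  have hvI : ∀ (μ : Measure (Vd d)), IsProbabilityMeasure μ →
      Integrable (fun v : Vd d => ‖v‖ ^ 2) μ → Integrable (fun v : Vd d => v) μ := by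
    intro μ hμ hint
    refine Integrable.mono' ((integrable_const (1 : ℝ)).add hint) aestronglyMeasurable_id ?_
    filter_upwards with v
    show ‖v‖ ≤ 1 + ‖v‖ ^ 2
    nlinarith [sq_nonneg (‖v‖ - 1), norm_nonneg v]
  have hvf : Integrable (fun v : Vd d => v) f := hvI f hf hf2
  have hvg : Integrable (fun v : Vd d => v) g := hvI g hg hg2
  set m := ∫ v, v ∂f with hm_def
  have hmg : (∫ v, v ∂g) = m := hmean.symm
  have hmnorm : ‖m‖ ≤ (1 + M) / 2 := by
    have h1 : ‖m‖ ≤ ∫ v, ‖v‖ ∂f := norm_integral_le_integral_norm _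
    have h2 : (∫ v, ‖v‖ ∂f) ≤ ∫ v, (1 + ‖v‖ ^ 2) / 2 ∂f := by
      refine integral_mono hvf.norm (((integrable_const (1 : ℝ)).add hf2).div_const 2) ?_
      intro v
      show ‖v‖ ≤ (1 + ‖v‖ ^ 2) / 2
      nlinarith [sq_nonneg (‖v‖ - 1)]
    have h3 : (∫ v, (1 + ‖v‖ ^ 2) / 2 ∂f) = (1 + Mf) / 2 := by
      rw [integral_div, integral_add (integrable_const _) hf2, integral_const]
      simp [measure_univ]
      rfl
    have h4 : (1 + Mf) / 2 ≤ (1 + M) / 2 := by linarith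
    linarith
  -- geometry
  set p : Vd d := (1 / 2 : ℝ) • (ξ + ‖ξ‖ • σ) with hp_def
  set q : Vd d := (1 / 2 : ℝ) • (ξ - ‖ξ‖ • σ) with hq_def
  have hξ0 : 0 < ‖ξ‖ := norm_pos_iff.mpr hξ
  set s := Real.sqrt (1 - (inner ℝ σ ξ : ℝ) / ‖ξ‖) with hs_def
  have hs0 : 0 ≤ s := Real.sqrt_nonneg _
  have hinner : |(inner ℝ σ ξ : ℝ)| ≤ ‖ξ‖ := by
    have := abs_real_inner_le_norm σ ξ
    rwa [hσ, one_mul] at this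
  have h1c0 : 0 ≤ 1 - (inner ℝ σ ξ : ℝ) / ‖ξ‖ := by
    have : (inner ℝ σ ξ : ℝ) / ‖ξ‖ ≤ 1 := by
      rw [div_le_one hξ0]
      exact le_trans (le_abs_self _) hinner
    linarith
  have hs2 : s ^ 2 = 1 - (inner ℝ σ ξ : ℝ) / ‖ξ‖ := Real.sq_sqrt h1c0
  have hdiv : (inner ℝ σ ξ : ℝ) / ‖ξ‖ * ‖ξ‖ = (inner ℝ σ ξ : ℝ) := div_mul_cancel₀ _ hξ0.ne'
  have hsle : s ≤ 2 := by
    have hge : -1 ≤ (inner ℝ σ ξ : ℝ) / ‖ξ‖ := by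
      rw [le_div_iff₀ hξ0]
      nlinarith [neg_abs_le (inner ℝ σ ξ : ℝ)]
    nlinarith [hs0, hs2]
  have hpq : p + q = ξ := by rw [hp_def, hq_def]; module
  have hp1 : ‖p‖ ≤ ‖ξ‖ := by
    rw [hp_def, norm_smul]
    have h1 : ‖ξ + ‖ξ‖ • σ‖ ≤ ‖ξ‖ + ‖‖ξ‖ • σ‖ := norm_add_le _ _
    have h2 : ‖‖ξ‖ • σ‖ = ‖ξ‖ := by rw [norm_smul, hσ, Real.norm_eq_abs, abs_norm, mul_one]
    rw [Real.norm_eq_abs]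
    rw [h2] at h1
    rw [show |(1 / 2 : ℝ)| = 1 / 2 by norm_num]
    linarith
  have hnq : ‖q‖ ^ 2 = (‖ξ‖ ^ 2 - ‖ξ‖ * (inner ℝ σ ξ : ℝ)) / 2 := by
    have h2 : ‖‖ξ‖ • σ‖ ^ 2 = ‖ξ‖ ^ 2 := by
      rw [norm_smul, hσ, Real.norm_eq_abs, abs_norm, mul_one]
    have h1 : ‖ξ - ‖ξ‖ • σ‖ ^ 2 = ‖ξ‖ ^ 2 - 2 * (‖ξ‖ * (inner ℝ σ ξ : ℝ)) + ‖ξ‖ ^ 2 := by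
      rw [norm_sub_sq_real, real_inner_smul_right, real_inner_comm, h2]
    rw [hq_def, norm_smul, Real.norm_eq_abs, mul_pow, h1]
    rw [show |(1 / 2 : ℝ)| = 1 / 2 by norm_num]
    ring
  have hqs : ‖q‖ ^ 2 = ‖ξ‖ ^ 2 * s ^ 2 / 2 := by
    rw [hnq, hs2]
    field_simp
  have hq2 : ‖q‖ ^ 2 ≤ ‖ξ‖ ^ 2 * s := by
    nlinarith [hqs, mul_nonneg (mul_nonneg (sub_nonneg.mpr hsle) hs0) (sq_nonneg ‖ξ‖)]
  have hq1 : ‖q‖ ≤ ‖ξ‖ * s := by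
    have hq2' : ‖q‖ ^ 2 ≤ (‖ξ‖ * s) ^ 2 := by
      nlinarith [hqs, sq_nonneg (‖ξ‖ * s)]
    nlinarith [norm_nonneg q, mul_nonneg (norm_nonneg ξ) hs0, hq2']
  set K := ‖ξ‖ ^ 2 * s with hK_def
  have hK0 : 0 ≤ K := by positivity
  have hpqK : ‖p‖ * ‖q‖ ≤ K := by
    calc ‖p‖ * ‖q‖ ≤ ‖ξ‖ * (‖ξ‖ * s) :=
          mul_le_mul hp1 hq1 (norm_nonneg q) (norm_nonneg ξ)
    _ = K := by rw [hK_def]; ring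
  -- Fourier bounds
  set Af := ftM d f p with hAf
  set Ag := ftM d g p with hAg
  set Bf := ftM d f q with hBf
  set Bg := ftM d g q with hBg
  set Cf := ftM d f ξ with hCf
  set Cg := ftM d g ξ with hCg
  set c : ℂ := ((inner ℝ q m : ℝ) : ℂ) with hc_def
  -- remainder bounds via ft_shift
  have hTf : ‖Cf - Af + Complex.I * c‖ ≤ (3 * ‖q‖ ^ 2 + 2 * ‖p‖ * ‖q‖) * Mf := by
    have := ft_shift f hf2 hvf p q
    rwa [hpq, ← hm_def] at this
  have hTg : ‖Cg - Ag + Complex.I * c‖ ≤ (3 * ‖q‖ ^ 2 + 2 * ‖p‖ * ‖q‖) * Mg := by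
    have := ft_shift g hg2 hvg p q
    rwa [hpq, hmg] at this
  have hRshift : ∀ (μ : Measure (Vd d)) (hμ : IsProbabilityMeasure μ)
      (h2 : Integrable (fun v : Vd d => ‖v‖ ^ 2) μ) (hv : Integrable (fun v : Vd d => v) μ)
      (b : Vd d),
      ‖ftM d μ b - 1 + Complex.I * ((inner ℝ b (∫ v, v ∂μ) : ℝ) : ℂ)‖
        ≤ 3 * ‖b‖ ^ 2 * ∫ v, ‖v‖ ^ 2 ∂μ := by
    intro μ hμ h2 hv b
    have := ft_shift μ h2 hv 0 b
    rw [zero_add, ftM_zero, norm_zero] at this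
    calc ‖ftM d μ b - 1 + Complex.I * ((inner ℝ b (∫ v, v ∂μ) : ℝ) : ℂ)‖
        ≤ (3 * ‖b‖ ^ 2 + 2 * 0 * ‖b‖) * ∫ v, ‖v‖ ^ 2 ∂μ := this
    _ = 3 * ‖b‖ ^ 2 * ∫ v, ‖v‖ ^ 2 ∂μ := by ring
  have hRf : ‖Bf - 1 + Complex.I * c‖ ≤ 3 * ‖q‖ ^ 2 * Mf := by
    have := hRshift f hf hf2 hvf q
    rwa [← hm_def] at this
  have hRg : ‖Bg - 1 + Complex.I * c‖ ≤ 3 * ‖q‖ ^ 2 * Mg := by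
    have := hRshift g hg hg2 hvg q
    rwa [hmg] at this
  -- difference of characteristic functions at p
  have hDp : ‖Af - Ag‖ ≤ (3 * M + 2) * ‖ξ‖ := by
    rcases le_or_gt ‖ξ‖ 1 with hle | hgt
    · have h1 := hRshift f hf hf2 hvf p
      have h2 := hRshift g hg hg2 hvg p
      rw [← hm_def] at h1
      rw [hmg] at h2
      set cp : ℂ := ((inner ℝ p m : ℝ) : ℂ)
      have hid : Af - Ag = (Af - 1 + Complex.I * cp) - (Ag - 1 + Complex.I * cp) := by ring
      rw [hid]
      have h3 := le_trans (norm_sub_le (Af - 1 + Complex.I * cp) (Ag - 1 + Complex.I * cp))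
        (add_le_add h1 h2)
      have h4 : ‖p‖ ^ 2 ≤ ‖ξ‖ ^ 2 := by nlinarith only [norm_nonneg p, hp1, norm_nonneg ξ]
      have h5 : ‖ξ‖ ^ 2 ≤ ‖ξ‖ := by nlinarith only [hle, hξ0]
      have h6 : 3 * ‖p‖ ^ 2 * Mf + 3 * ‖p‖ ^ 2 * Mg ≤ (3 * M + 2) * ‖ξ‖ := by
        nlinarith only [hMf0, hMg0, hMfg, h4, h5, hM, sq_nonneg ‖p‖, norm_nonneg ξ, hξ0]
      exact h3.trans h6
    · have h1 : ‖Af - Ag‖ ≤ 2 := by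
        calc ‖Af - Ag‖ ≤ ‖Af‖ + ‖Ag‖ := norm_sub_le _ _
        _ ≤ 1 + 1 := add_le_add (ftM_norm_le f p) (ftM_norm_le g p)
        _ = 2 := by norm_num
      have h2 : (2 : ℝ) ≤ (3 * M + 2) * ‖ξ‖ := by nlinarith only [hgt, hM]
      exact h1.trans h2
  -- the algebraic identity
  have hbig : (Af - Ag) * (Bf + Bg) + (Bf - Bg) * (Af + Ag) - 2 * (Cf - Cg)
      = 2 * (Af * (Bf - 1 + Complex.I * c) - Ag * (Bg - 1 + Complex.I * c)
          - (Cf - Af + Complex.I * c) + (Cg - Ag + Complex.I * c)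
          - Complex.I * c * (Af - Ag)) := by ring
  -- triangle inequality
  have htri : ‖Af * (Bf - 1 + Complex.I * c) - Ag * (Bg - 1 + Complex.I * c)
      - (Cf - Af + Complex.I * c) + (Cg - Ag + Complex.I * c) - Complex.I * c * (Af - Ag)‖
      ≤ ‖Af * (Bf - 1 + Complex.I * c)‖ + ‖Ag * (Bg - 1 + Complex.I * c)‖
        + ‖Cf - Af + Complex.I * c‖ + ‖Cg - Ag + Complex.I * c‖
        + ‖Complex.I * c * (Af - Ag)‖ := by
    have e1 := norm_sub_le (Af * (Bf - 1 + Complex.I * c) - Ag * (Bg - 1 + Complex.I * c)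
      - (Cf - Af + Complex.I * c) + (Cg - Ag + Complex.I * c)) (Complex.I * c * (Af - Ag))
    have e2 := norm_add_le (Af * (Bf - 1 + Complex.I * c) - Ag * (Bg - 1 + Complex.I * c)
      - (Cf - Af + Complex.I * c)) (Cg - Ag + Complex.I * c)
    have e3 := norm_sub_le (Af * (Bf - 1 + Complex.I * c) - Ag * (Bg - 1 + Complex.I * c))
      (Cf - Af + Complex.I * c)
    have e4 := norm_sub_le (Af * (Bf - 1 + Complex.I * c)) (Ag * (Bg - 1 + Complex.I * c))
    linarith
  -- bounds on individual terms
  have hb1 : ‖Af * (Bf - 1 + Complex.I * c)‖ ≤ 3 * Mf * K := by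
    rw [norm_mul]
    calc ‖Af‖ * ‖Bf - 1 + Complex.I * c‖ ≤ 1 * (3 * ‖q‖ ^ 2 * Mf) :=
          mul_le_mul (ftM_norm_le f p) hRf (norm_nonneg _) zero_le_one
    _ = 3 * ‖q‖ ^ 2 * Mf := by ring
    _ ≤ 3 * Mf * K := by nlinarith only [hq2, hMf0]
  have hb2 : ‖Ag * (Bg - 1 + Complex.I * c)‖ ≤ 3 * Mg * K := by
    rw [norm_mul]
    calc ‖Ag‖ * ‖Bg - 1 + Complex.I * c‖ ≤ 1 * (3 * ‖q‖ ^ 2 * Mg) :=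
          mul_le_mul (ftM_norm_le g p) hRg (norm_nonneg _) zero_le_one
    _ = 3 * ‖q‖ ^ 2 * Mg := by ring
    _ ≤ 3 * Mg * K := by nlinarith only [hq2, hMg0]
  have hb3 : ‖Cf - Af + Complex.I * c‖ ≤ 5 * Mf * K := by
    calc ‖Cf - Af + Complex.I * c‖ ≤ (3 * ‖q‖ ^ 2 + 2 * ‖p‖ * ‖q‖) * Mf := hTf
    _ ≤ 5 * Mf * K := by nlinarith only [hq2, hpqK, hMf0]
  have hb4 : ‖Cg - Ag + Complex.I * c‖ ≤ 5 * Mg * K := by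
    calc ‖Cg - Ag + Complex.I * c‖ ≤ (3 * ‖q‖ ^ 2 + 2 * ‖p‖ * ‖q‖) * Mg := hTg
    _ ≤ 5 * Mg * K := by nlinarith only [hq2, hpqK, hMg0]
  have hb5 : ‖Complex.I * c * (Af - Ag)‖ ≤ (1 + M) / 2 * (3 * M + 2) * K := by
    have hcn : ‖Complex.I * c‖ = |(inner ℝ q m : ℝ)| := by
      rw [norm_mul, Complex.norm_I, one_mul, hc_def, Complex.norm_real, Real.norm_eq_abs]
    rw [norm_mul, hcn]
    have h1 : |(inner ℝ q m : ℝ)| ≤ ‖ξ‖ * s * ((1 + M) / 2) := by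
      calc |(inner ℝ q m : ℝ)| ≤ ‖q‖ * ‖m‖ := abs_real_inner_le_norm q m
      _ ≤ ‖ξ‖ * s * ((1 + M) / 2) :=
          mul_le_mul hq1 hmnorm (norm_nonneg m) (by positivity)
    calc |(inner ℝ q m : ℝ)| * ‖Af - Ag‖ ≤ (‖ξ‖ * s * ((1 + M) / 2)) * ((3 * M + 2) * ‖ξ‖) :=
          mul_le_mul h1 hDp (norm_nonneg _) (by positivity)
    _ = (1 + M) / 2 * (3 * M + 2) * K := by rw [hK_def]; ring
  -- put everything together
  rw [hbig, norm_mul]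
  have h2n : ‖(2 : ℂ)‖ = 2 := by simp
  rw [h2n]
  have hfinal : ‖Af * (Bf - 1 + Complex.I * c) - Ag * (Bg - 1 + Complex.I * c)
      - (Cf - Af + Complex.I * c) + (Cg - Ag + Complex.I * c) - Complex.I * c * (Af - Ag)‖
      ≤ (3 * Mf + 3 * Mg + 5 * Mf + 5 * Mg + (1 + M) / 2 * (3 * M + 2)) * K := by
    calc _ ≤ _ := htri
    _ ≤ (3 * Mf + 3 * Mg + 5 * Mf + 5 * Mg + (1 + M) / 2 * (3 * M + 2)) * K := by
        linarith only [hb1, hb2, hb3, hb4, hb5]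
  calc 2 * ‖Af * (Bf - 1 + Complex.I * c) - Ag * (Bg - 1 + Complex.I * c)
      - (Cf - Af + Complex.I * c) + (Cg - Ag + Complex.I * c) - Complex.I * c * (Af - Ag)‖
      ≤ 2 * ((3 * Mf + 3 * Mg + 5 * Mf + 5 * Mg + (1 + M) / 2 * (3 * M + 2)) * K) := by
        linarith only [hfinal]
  _ ≤ ((1 + M) * (3 * M + 2) + 22 * M) * ‖ξ‖ ^ 2 * s := by
      rw [hK_def]
      nlinarith only [hMfg, hMf0, hMg0, hM, mul_nonneg (sq_nonneg ‖ξ‖) hs0]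

end
end
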